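/- Consider the deterministic Büchi automaton P over Σ = {a,b,c} with states {1,2,3,4,⊥}, initial state 1, accepting states {3,4}, and transitions: from 1: a→1, c→1, b→2; from 2: b→1, c→1, a→3; from 3: a→4, otherwise →⊥; from 4: c→3, otherwise →⊥; ⊥ is a rejecting sink. Then the language L = ⟦P⟧ is respective of its right congruence, but its complement L^c = Σ^ω ∖ L is not respective of its right congruence: b^ω ∈ L^c yet for every n, b^n ≁_{L^c} b^{n+1}. -/

import Mathlib

namespace OmegaRC

variable {σ : Type*} {Q : Type*}

/-- Concatenation of a finite word with an ω-word. -/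
def wcat (x : List σ) (w : ℕ → σ) : ℕ → σ :=
  fun n => if h : n < x.length then x.get ⟨n, h⟩ else w (n - x.length)

/-- Canonical right congruence of an ω-language: `x ∼_L y`. -/
def RC (L : Set (ℕ → σ)) (x y : List σ) : Prop :=
  ∀ w : ℕ → σ, wcat x w ∈ L ↔ wcat y w ∈ L

/-- The periodic ω-word `v^ω` (for nonempty `v`). -/
def wrep [Inhabited σ] (v : List σ) : ℕ → σ :=
  fun n => v.getD (n % v.length) default

/-- Finite power `v^n` of a finite word. -/
def wpow (v : List σ) (n : ℕ) : List σ := (List.replicate n v).flatten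

/-- The finite segment `w[i..j)` of an ω-word. -/
def segment (w : ℕ → σ) (i j : ℕ) : List σ :=
  (List.range (j - i)).map (fun k => w (i + k))

/-- `R^ω`: ω-words that are infinite concatenations of (nonempty) words of `R`. -/
def omegaPow (R : Set (List σ)) : Set (ℕ → σ) :=
  { w | ∃ f : ℕ → ℕ, f 0 = 0 ∧ StrictMono f ∧ ∀ i, segment w (f i) (f (i + 1)) ∈ R }

/-- A complete deterministic transition structure. -/
structure DetAut (σ : Type*) (Q : Type*) where
  init : Q
  step : Q → σ → Q

/-- Extended transition function on finite words. -/
def DetAut.runFin (A : DetAut σ Q) (q : Q) (x : List σ) : Q := x.foldl A.step q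

/-- The run of a deterministic automaton on an ω-word. -/
def DetAut.run (A : DetAut σ Q) (w : ℕ → σ) : ℕ → Q
  | 0 => A.init
  | n + 1 => A.step (A.run w n) (w n)

/-- The set of states occurring infinitely often in a run. -/
def infSet (r : ℕ → Q) : Set Q := { q | ∀ n, ∃ m, n ≤ m ∧ r m = q }

/-- Muller acceptance. -/
def MullerAcc (A : DetAut σ Q) (acc : Set (Set Q)) (w : ℕ → σ) : Prop :=
  infSet (A.run w) ∈ acc

/-- Büchi acceptance. -/
def BuchiAcc (A : DetAut σ Q) (F : Set Q) (w : ℕ → σ) : Prop :=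
  ∀ n, ∃ m, n ≤ m ∧ A.run w m ∈ F

/-- co-Büchi acceptance. -/
def CoBuchiAcc (A : DetAut σ Q) (F : Set Q) (w : ℕ → σ) : Prop :=
  ∃ n, ∀ m, n ≤ m → A.run w m ∉ F

/-- Colors occurring infinitely often in a run. -/
def infColors (κ : Q → ℕ) (r : ℕ → Q) : Set ℕ := { c | ∀ n, ∃ m, n ≤ m ∧ κ (r m) = c }

/-- Parity (min-odd) acceptance. -/
def ParityAcc (A : DetAut σ Q) (κ : Q → ℕ) (w : ℕ → σ) : Prop :=
  ∃ c ∈ infColors κ (A.run w), (∀ c' ∈ infColors κ (A.run w), c ≤ c') ∧ Odd c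

/-- `S` is strongly connected. -/
def IsSCC (A : DetAut σ Q) (S : Set Q) : Prop :=
  ∀ s1 ∈ S, ∀ s2 ∈ S, ∃ x : List σ, x ≠ [] ∧ A.runFin s1 x = s2

/-- Transitions taken infinitely often in the run on `w`. -/
def infTrans (A : DetAut σ Q) (w : ℕ → σ) : Set (Q × σ × Q) :=
  { t | ∀ n, ∃ m, n ≤ m ∧ (A.run w m, w m, A.run w (m + 1)) = t }

/-- Transition-table (transition-based Muller) acceptance. -/
def TransAcc (A : DetAut σ Q) (acc : Set (Set (Q × σ × Q))) (w : ℕ → σ) : Prop :=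
  infTrans A w ∈ acc

/-- Non-counting ω-language. -/
def NonCounting (L : Set (ℕ → σ)) : Prop :=
  ∃ n₀ : ℕ, ∀ n > n₀, ∀ u v : List σ, ∀ w : ℕ → σ,
    (wcat (u ++ wpow v n) w ∈ L ↔ wcat (u ++ wpow v (n + 1)) w ∈ L)

/-- `L` is respective of its right congruence. -/
def Respective [Inhabited σ] (L : Set (ℕ → σ)) : Prop :=
  ∃ n₀ : ℕ, ∀ n > n₀, ∀ x u : List σ, u ≠ [] →
    wcat x (wrep u) ∈ L → RC L (x ++ wpow u n) (x ++ wpow u (n + 1))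

/-- Transition function of the DBA `P` (states 1,2,3,4,⊥ ↦ 0,1,2,3,4; letters a,b,c ↦ 0,1,2). -/
def Pstep : Fin 5 → Fin 3 → Fin 5 := fun q a =>
  if q = 0 then (if a = 1 then 1 else 0)
  else if q = 1 then (if a = 0 then 2 else 0)
  else if q = 2 then (if a = 0 then 3 else 4)
  else if q = 3 then (if a = 2 then 2 else 4)
  else 4

-- ======== auxiliary material ========

def runFrom (A : DetAut σ Q) (q : Q) (w : ℕ → σ) : ℕ → Q
  | 0 => q
  | n + 1 => A.step (runFrom A q w n) (w n)

lemma run_eq_runFrom (A : DetAut σ Q) (w : ℕ → σ) (n : ℕ) :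
    A.run w n = runFrom A A.init w n := by
  induction n with
  | zero => rfl
  | succ n ih => simp [DetAut.run, runFrom, ih]

lemma runFrom_add (A : DetAut σ Q) (q : Q) (w : ℕ → σ) (a b : ℕ) :
    runFrom A q w (a + b) = runFrom A (runFrom A q w a) (fun n => w (a + n)) b := by
  induction b with
  | zero => rfl
  | succ b ih =>
    show runFrom A q w ((a+b)+1) = _
    rw [runFrom, ih]
    rfl

lemma runFrom_list (A : DetAut σ Q) (q : Q) (w : ℕ → σ) (x : List σ)
    (h : ∀ i (hi : i < x.length), w i = x[i]) :
    runFrom A q w x.length = A.runFin q x := by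
  induction x generalizing q w with
  | nil => rfl
  | cons a t ih =>
    have hlen : (a :: t).length = 1 + t.length := by simp [Nat.add_comm]
    rw [hlen, runFrom_add]
    have h0 : runFrom A q w 1 = A.step q a := by
      have := h 0 (by simp)
      simp only [runFrom] at *
      rw [this]; rfl
    rw [h0]
    rw [ih (A.step q a) (fun n => w (1 + n)) (fun i hi => by
      have := h (1 + i) (by omega)
      simpa [Nat.add_comm 1 i] using this)]
    rfl

lemma wcat_ge (x : List σ) (w : ℕ → σ) (n : ℕ) : wcat x w (x.length + n) = w n := by
  simp [wcat]

lemma runFrom_wcat (A : DetAut σ Q) (q : Q) (x : List σ) (w : ℕ → σ) (m : ℕ) :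
    runFrom A q (wcat x w) (x.length + m) = runFrom A (A.runFin q x) w m := by
  rw [runFrom_add, runFrom_list A q _ x (fun i hi => by simp [wcat, hi])]
  congr 1
  funext n
  exact wcat_ge x w n

def AccFrom (A : DetAut σ Q) (F : Set Q) (q : Q) (w : ℕ → σ) : Prop :=
  ∀ n, ∃ m, n ≤ m ∧ runFrom A q w m ∈ F

lemma buchi_iff_accFrom (A : DetAut σ Q) (F : Set Q) (w : ℕ → σ) :
    BuchiAcc A F w ↔ AccFrom A F A.init w := by
  unfold BuchiAcc AccFrom
  simp [run_eq_runFrom]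

lemma accFrom_wcat (A : DetAut σ Q) (F : Set Q) (q : Q) (x : List σ) (w : ℕ → σ) :
    AccFrom A F q (wcat x w) ↔ AccFrom A F (A.runFin q x) w := by
  constructor
  · intro h n
    obtain ⟨m, hm, hF⟩ := h (x.length + n)
    refine ⟨m - x.length, by omega, ?_⟩
    have he : x.length + (m - x.length) = m := by omega
    rw [← runFrom_wcat, he]; exact hF
  · intro h n
    obtain ⟨m, hm, hF⟩ := h n
    exact ⟨x.length + m, by omega, by rw [runFrom_wcat]; exact hF⟩

lemma wpow_succ (u : List σ) (m : ℕ) : wpow u (m+1) = wpow u m ++ u := by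
  simp [wpow, List.replicate_succ']

lemma runFin_append (A : DetAut σ Q) (q : Q) (x y : List σ) :
    A.runFin q (x ++ y) = A.runFin (A.runFin q x) y := by
  simp [DetAut.runFin, List.foldl_append]

lemma runFin_wpow_eq (A : DetAut σ Q) [Inhabited σ] (q : Q) (u : List σ) (k : ℕ) :
    A.runFin q (wpow u k) = runFrom A q (wrep u) (k * u.length) := by
  induction k with
  | zero => simp [wpow, DetAut.runFin, runFrom]
  | succ k ih =>
    rw [wpow_succ, runFin_append, ih]
    have he : (k+1) * u.length = k * u.length + u.length := by ring
    rw [he, runFrom_add]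
    rw [runFrom_list A _ _ u (fun i hi => ?_)]
    show wrep u (k * u.length + i) = u[i]
    have hm : (k * u.length + i) % u.length = i := by
      rw [Nat.add_comm, Nat.add_mul_mod_self_right]; exact Nat.mod_eq_of_lt hi
    simp [wrep, hm, List.getElem?_eq_getElem hi]

lemma wrep_mul [Inhabited σ] (u : List σ) (k : ℕ) :
    wrep u (k * u.length) = u.getD 0 default := by
  simp [wrep, Nat.mul_mod_left]

-- ======== the automaton ========
def P0 : DetAut (Fin 3) (Fin 5) := ⟨0, Pstep⟩
def F0 : Set (Fin 5) := {2, 3}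
def L0 : Set (ℕ → Fin 3) := { w | BuchiAcc P0 F0 w }

lemma memF0 : ∀ z : Fin 5, z ∈ F0 ↔ z = 2 ∨ z = 3 := fun z => by simp [F0]

lemma mem_L0 (y : List (Fin 3)) (w : ℕ → Fin 3) :
    wcat y w ∈ L0 ↔ AccFrom P0 F0 (P0.runFin 0 y) w :=
  (buchi_iff_accFrom P0 F0 (wcat y w)).trans (accFrom_wcat P0 F0 P0.init y w)

-- b^ω is rejected
lemma bomega_not_mem : (fun _ => (1 : Fin 3)) ∉ L0 := by
  have ht : ∀ m, runFrom P0 P0.init (fun _ => (1:Fin 3)) m = if m % 2 = 0 then 0 else 1 := by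
    intro m; induction m with
    | zero => simp [runFrom]; rfl
    | succ m ih =>
      rw [runFrom, ih]
      rcases Nat.even_or_odd m with h|h
      · have h1 : m % 2 = 0 := Nat.even_iff.mp h
        have h2 : (m+1) % 2 = 1 := by omega
        rw [h1, h2]; simp
        exact (by decide : P0.step 0 1 = 1)
      · have h1 : m % 2 = 1 := Nat.odd_iff.mp h
        have h2 : (m+1) % 2 = 0 := by omega
        rw [h1, h2]; simp
        exact (by decide : P0.step 1 1 = 0)
  intro h
  obtain ⟨m, _, hF⟩ := h 0
  rw [run_eq_runFrom, ht, memF0] at hF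
  rcases Nat.even_or_odd m with h'|h'
  · rw [Nat.even_iff.mp h'] at hF
    exact absurd hF (by decide)
  · rw [Nat.odd_iff.mp h'] at hF
    exact absurd hF (by decide)

-- the distinguishing tail (ac)^ω
def vv : ℕ → Fin 3 := fun k => if k % 2 = 0 then 0 else 2

lemma hv2 : ∀ m, runFrom P0 (2:Fin 5) vv m = if m % 2 = 0 then 2 else 3 := by
  intro m; induction m with
  | zero => simp [runFrom]
  | succ m ih =>
    rw [runFrom, ih]
    rcases Nat.even_or_odd m with h|h
    · have h1 : m % 2 = 0 := Nat.even_iff.mp h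
      have h2 : (m+1) % 2 = 1 := by omega
      rw [h1, h2]; simp [vv, h1]
      exact (by decide : P0.step 2 0 = 3)
    · have h1 : m % 2 = 1 := Nat.odd_iff.mp h
      have h2 : (m+1) % 2 = 0 := by omega
      rw [h1, h2]; simp [vv, h1]
      exact (by decide : P0.step 3 2 = 2)

lemma hv0 : ∀ m, runFrom P0 (0:Fin 5) vv m = 0 := by
  intro m; induction m with
  | zero => rfl
  | succ m ih =>
    rw [runFrom, ih]
    have : ∀ l : Fin 3, l ≠ 1 → P0.step 0 l = 0 := by decide
    apply this
    unfold vv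
    split <;> decide

lemma acc2 : AccFrom P0 F0 2 vv := by
  intro n
  refine ⟨2*n, by omega, ?_⟩
  rw [hv2, memF0]
  simp [Nat.mul_mod_right]

lemma nacc0 : ¬ AccFrom P0 F0 0 vv := by
  intro h
  obtain ⟨m, _, hF⟩ := h 0
  rw [hv0, memF0] at hF
  exact absurd hF (by decide)

lemma t_repl : ∀ n, P0.runFin 0 (List.replicate n (1:Fin 3)) = if n % 2 = 0 then 0 else 1 := by
  intro n; induction n with
  | zero => rfl
  | succ n ih =>
    rw [List.replicate_succ', runFin_append, ih]
    have e : ∀ z : Fin 5, P0.runFin z [(1:Fin 3)] = P0.step z 1 := fun z => rfl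
    rcases Nat.even_or_odd n with h|h
    · have h1 : n % 2 = 0 := Nat.even_iff.mp h
      have h2 : (n+1) % 2 = 1 := by omega
      rw [h1, h2]; simp [e]
      exact (by decide : P0.step 0 1 = 1)
    · have h1 : n % 2 = 1 := Nat.odd_iff.mp h
      have h2 : (n+1) % 2 = 0 := by omega
      rw [h1, h2]; simp [e]
      exact (by decide : P0.step 1 1 = 0)

lemma not_rc (n : ℕ) :
    ¬ RC L0ᶜ (List.replicate n (1:Fin 3)) (List.replicate (n+1) (1:Fin 3)) := by
  intro h
  rcases Nat.even_or_odd n with hpar|hpar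
  · -- state after b^n is 0, after b^{n+1} is 1; use w = wcat [1,0] vv
    have h1 : n % 2 = 0 := Nat.even_iff.mp hpar
    have h2 : (n+1) % 2 = 1 := by omega
    have hiff := h (wcat [1,0] vv)
    rw [Set.mem_compl_iff, Set.mem_compl_iff, mem_L0, mem_L0, t_repl, t_repl, h1, h2] at hiff
    simp only [if_pos rfl] at hiff
    norm_num at hiff
    have hA : AccFrom P0 F0 0 (wcat [1,0] vv) := by
      rw [accFrom_wcat]
      rw [show P0.runFin 0 [(1:Fin 3),0] = 2 from by decide]
      exact acc2
    have hB : ¬ AccFrom P0 F0 1 (wcat [1,0] vv) := by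
      rw [accFrom_wcat]
      rw [show P0.runFin 1 [(1:Fin 3),0] = 0 from by decide]
      exact nacc0
    exact (hiff.mpr hB) hA
  · have h1 : n % 2 = 1 := Nat.odd_iff.mp hpar
    have h2 : (n+1) % 2 = 0 := by omega
    have hiff := h (wcat [0] vv)
    rw [Set.mem_compl_iff, Set.mem_compl_iff, mem_L0, mem_L0, t_repl, t_repl, h1, h2] at hiff
    norm_num at hiff
    have hA : AccFrom P0 F0 1 (wcat [0] vv) := by
      rw [accFrom_wcat]
      rw [show P0.runFin 1 [(0:Fin 3)] = 2 from by decide]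
      exact acc2
    have hB : ¬ AccFrom P0 F0 0 (wcat [0] vv) := by
      rw [accFrom_wcat]
      rw [show P0.runFin 0 [(0:Fin 3)] = 0 from by decide]
      exact nacc0
    exact (hiff.mpr hB) hA

lemma stable (q : Fin 5) (u : List (Fin 3)) (hu : u ≠ [])
    (hacc : AccFrom P0 F0 q (wrep u)) :
    ∀ k, 2 ≤ k → P0.runFin q (wpow u k) = P0.runFin q (wpow u (k+1)) := by
  have hulen : 0 < u.length := List.length_pos_iff.mpr hu
  have hrsucc : ∀ p, runFrom P0 q (wrep u) (p+1)
      = P0.step (runFrom P0 q (wrep u) p) (wrep u p) := fun p => rfl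
  have hK1 : ∀ p d, runFrom P0 q (wrep u) p = 4 → runFrom P0 q (wrep u) (p + d) = 4 := by
    intro p d h4
    induction d with
    | zero => exact h4
    | succ d ih =>
      show runFrom P0 q (wrep u) ((p+d)+1) = 4
      rw [hrsucc, ih]
      exact (by decide : ∀ l : Fin 3, P0.step 4 l = 4) _
  have hK2 : ∀ p, runFrom P0 q (wrep u) p ≠ 4 := by
    intro p h4
    obtain ⟨m, hm, hF⟩ := hacc p
    rw [memF0] at hF
    have h4m : runFrom P0 q (wrep u) m = 4 := by
      have := hK1 p (m - p) h4
      rwa [show p + (m - p) = m by omega] at this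
    rw [h4m] at hF
    exact absurd hF (by decide)
  have hK3 : ∀ p, runFrom P0 q (wrep u) p ∈ F0 → runFrom P0 q (wrep u) (p+1) ∈ F0 := by
    intro p hF
    rw [memF0] at hF ⊢
    have h4 := hK2 (p+1)
    rw [hrsucc] at h4 ⊢
    rcases hF with h|h <;> rw [h] at h4 ⊢
    · rcases (by decide : ∀ l : Fin 3, P0.step 2 l = 3 ∨ P0.step 2 l = 4) (wrep u p) with h'|h'
      · exact Or.inr h'
      · exact absurd h' h4
    · rcases (by decide : ∀ l : Fin 3, P0.step 3 l = 2 ∨ P0.step 3 l = 4) (wrep u p) with h'|h'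
      · exact Or.inl h'
      · exact absurd h' h4
  have hK4 : ∀ p d, runFrom P0 q (wrep u) p ∈ F0 → runFrom P0 q (wrep u) (p + d) ∈ F0 := by
    intro p d h
    induction d with
    | zero => exact h
    | succ d ih => exact hK3 _ ih
  set c : Fin 5 := if u.getD 0 default = (0:Fin 3) then 2 else 3 with hc
  have hforce : ∀ p, runFrom P0 q (wrep u) p ∈ F0 → wrep u p = u.getD 0 default →
      runFrom P0 q (wrep u) p = c := by
    intro p hF hl
    rw [memF0] at hF
    have h4 := hK2 (p+1)
    rw [hrsucc] at h4
    rcases hF with h|h <;> rw [h] at h4 ⊢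
    · have h0 : wrep u p = 0 :=
        (by decide : ∀ l : Fin 3, P0.step 2 l ≠ 4 → l = 0) _ h4
      rw [hc, ← hl, h0]; simp
    · have h0 : wrep u p = 2 :=
        (by decide : ∀ l : Fin 3, P0.step 3 l ≠ 4 → l = 2) _ h4
      rw [hc, ← hl, h0]; decide
  have hs : ∀ k, P0.runFin q (wpow u k) = runFrom P0 q (wrep u) (k * u.length) :=
    fun k => runFin_wpow_eq P0 q u k
  have hsF_c : ∀ k, runFrom P0 q (wrep u) (k * u.length) ∈ F0 →
      runFrom P0 q (wrep u) (k * u.length) = c :=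
    fun k h => hforce _ h (wrep_mul u k)
  obtain ⟨m, _, hmF⟩ := hacc 0
  have hmm : runFrom P0 q (wrep u) (m * u.length) ∈ F0 := by
    have hle : m ≤ m * u.length := Nat.le_mul_of_pos_right m hulen
    have := hK4 m (m * u.length - m) hmF
    rwa [show m + (m * u.length - m) = m * u.length by omega] at this
  have hm1 : runFrom P0 q (wrep u) ((m+1) * u.length) ∈ F0 := by
    have := hK4 (m * u.length) u.length hmm
    rwa [show m * u.length + u.length = (m+1) * u.length by ring] at this
  have hcm : runFrom P0 q (wrep u) (m * u.length) = c := hsF_c m hmm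
  have hcm1 : runFrom P0 q (wrep u) ((m+1) * u.length) = c := hsF_c (m+1) hm1
  have hstep_s : ∀ k, P0.runFin q (wpow u (k+1)) = P0.runFin (P0.runFin q (wpow u k)) u := by
    intro k; rw [wpow_succ, runFin_append]
  have e01 : P0.runFin q (wpow u 1) = P0.runFin (P0.runFin q (wpow u 0)) u := hstep_s 0
  have e12 : P0.runFin q (wpow u 2) = P0.runFin (P0.runFin q (wpow u 1)) u := hstep_s 1
  have hcfix : P0.runFin c u = c := by
    have hthis : P0.runFin q (wpow u (m+1)) = c := by rw [hs (m+1)]; exact hcm1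
    rw [hstep_s m, hs m, hcm] at hthis
    exact hthis
  have hin : ∀ k, P0.runFin q (wpow u k) = 0 ∨ P0.runFin q (wpow u k) = 1
      ∨ P0.runFin q (wpow u k) = c := by
    intro k
    have h4 := hK2 (k * u.length)
    rw [hs]
    rcases (by decide : ∀ z : Fin 5, z = 0 ∨ z = 1 ∨ z = 2 ∨ z = 3 ∨ z = 4)
        (runFrom P0 q (wrep u) (k * u.length)) with h|h|h|h|h
    · exact Or.inl h
    · exact Or.inr (Or.inl h)
    · exact Or.inr (Or.inr (hsF_c k (by rw [memF0]; exact Or.inl h)))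
    · exact Or.inr (Or.inr (hsF_c k (by rw [memF0]; exact Or.inr h)))
    · exact absurd h h4
  have hP1 : ∀ k, P0.runFin q (wpow u k) = c → P0.runFin q (wpow u (k+1)) = c := by
    intro k h; rw [hstep_s, h, hcfix]
  have hP1' : ∀ k d, P0.runFin q (wpow u k) = c → P0.runFin q (wpow u (k+d)) = c := by
    intro k d h
    induction d with
    | zero => exact h
    | succ d ih => exact hP1 _ ih
  have hex2 : P0.runFin q (wpow u 2) = c := by
    by_contra h2c
    have h0c : P0.runFin q (wpow u 0) ≠ c := fun h => h2c (hP1' 0 2 h)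
    have h1c : P0.runFin q (wpow u 1) ≠ c := fun h => h2c (hP1' 1 1 h)
    have h0 : P0.runFin q (wpow u 0) = 0 ∨ P0.runFin q (wpow u 0) = 1 := by
      rcases hin 0 with h|h|h
      exacts [Or.inl h, Or.inr h, absurd h h0c]
    have h1 : P0.runFin q (wpow u 1) = 0 ∨ P0.runFin q (wpow u 1) = 1 := by
      rcases hin 1 with h|h|h
      exacts [Or.inl h, Or.inr h, absurd h h1c]
    have h2 : P0.runFin q (wpow u 2) = 0 ∨ P0.runFin q (wpow u 2) = 1 := by
      rcases hin 2 with h|h|h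
      exacts [Or.inl h, Or.inr h, absurd h h2c]
    have hs2 : P0.runFin q (wpow u 2) = P0.runFin q (wpow u 0)
        ∨ P0.runFin q (wpow u 2) = P0.runFin q (wpow u 1) := by
      by_cases he : P0.runFin q (wpow u 0) = P0.runFin q (wpow u 1)
      · right; rw [e12, ← he, ← e01]; exact he.symm
      · rcases h0 with e0|e0 <;> rcases h1 with e1|e1 <;> rcases h2 with e2|e2 <;>
          first
            | (exact absurd (e0.trans e1.symm) he)
            | (exact Or.inl (e2.trans e0.symm))
            | (exact Or.inr (e2.trans e1.symm))
    have hall : ∀ k, P0.runFin q (wpow u k) = P0.runFin q (wpow u 0)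
        ∨ P0.runFin q (wpow u k) = P0.runFin q (wpow u 1) := by
      intro k
      induction k with
      | zero => exact Or.inl rfl
      | succ k ih =>
        rcases ih with h|h
        · right; rw [hstep_s, h, ← e01]
        · rcases hs2 with h'|h'
          · left; rw [hstep_s, h, ← e12, h']
          · right; rw [hstep_s, h, ← e12, h']
    have hmc : P0.runFin q (wpow u m) = c := by rw [hs]; exact hcm
    rcases hall m with h|h
    · exact h0c (h.symm.trans hmc)
    · exact h1c (h.symm.trans hmc)
  intro k hk
  have e1 : P0.runFin q (wpow u k) = c := by
    have := hP1' 2 (k - 2) hex2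
    rwa [show 2 + (k - 2) = k by omega] at this
  rw [e1, hP1 k e1]

lemma L0_respective : Respective L0 := by
  refine ⟨2, fun n hn x u hu hx => ?_⟩
  have hx' : BuchiAcc P0 F0 (wcat x (wrep u)) := hx
  have hacc : AccFrom P0 F0 (P0.runFin 0 x) (wrep u) :=
    (accFrom_wcat P0 F0 P0.init x (wrep u)).mp ((buchi_iff_accFrom P0 F0 _).mp hx')
  have hst := stable (P0.runFin 0 x) u hu hacc n (by omega)
  intro w
  rw [mem_L0, mem_L0, runFin_append, runFin_append, hst]

lemma L0c_not_respective : ¬ Respective L0ᶜ := by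
  intro hresp
  obtain ⟨n₀, h⟩ := hresp
  have hmemc : wcat [] (wrep [(1:Fin 3)]) ∈ L0ᶜ := by
    have he : wcat [] (wrep [(1:Fin 3)]) = fun _ => (1:Fin 3) := by
      funext k; simp [wcat, wrep, Nat.mod_one]
    rw [he]
    exact bomega_not_mem
  have h1 := h (n₀+1) (by omega) [] [1] (by simp) hmemc
  have hw : ∀ m, wpow [(1:Fin 3)] m = List.replicate m 1 := by
    intro m; induction m with
    | zero => rfl
    | succ m ih => rw [wpow_succ, ih, ← List.replicate_succ']
  rw [List.nil_append, List.nil_append, hw, hw] at h1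
  exact not_rc (n₀+1) h1


/-- `⟦P⟧` is respective of its right congruence but its complement is not:
`b^ω ∈ ⟦P⟧ᶜ` yet `b^n ≁ b^{n+1}` for every `n`. -/
theorem P_respective_complement_not :
    let P : DetAut (Fin 3) (Fin 5) := ⟨0, Pstep⟩
    let L : Set (ℕ → Fin 3) := { w | BuchiAcc P ({2, 3} : Set (Fin 5)) w }
    Respective L ∧
    (fun _ => (1 : Fin 3)) ∈ Lᶜ ∧
    (∀ n : ℕ, ¬ RC Lᶜ (List.replicate n (1 : Fin 3)) (List.replicate (n + 1) (1 : Fin 3))) ∧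
    ¬ Respective Lᶜ := by
  intro P L
  exact ⟨L0_respective, bomega_not_mem, not_rc, L0c_not_respective⟩

end OmegaRC
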